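/- Let K be a field with a ring topology τ (a Hausdorff, non-discrete topology making addition, negation, and multiplication continuous) and let S be a τ-open subring of K. Then K is the fraction field of S, i.e., every element of K can be written as a quotient a/b with a, b ∈ S and b ≠ 0. -/

import Mathlib

open Topology

/-- Let `K` be a field with a ring topology (Hausdorff, non-discrete, with
continuous addition, negation and multiplication) and let `S` be an open subring of `K`.
Then `K` is the fraction field of `S`: every element of `K` is a quotient of elements
of `S`. -/
theorem statement17 {K : Type*} [Field K] [TopologicalSpace K]
    [IsTopologicalRing K] [T2Space K]
    (hnd : ¬ DiscreteTopology K)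
    (S : Subring K) (hopen : IsOpen (S : Set K)) :
    ∀ x : K, ∃ a ∈ S, ∃ b ∈ S, b ≠ 0 ∧ x = a / b := by
  intro x
  have h0 : ¬ IsOpen ({(0 : K)} : Set K) := by
    intro h
    exact hnd (discreteTopology_iff_isOpen_singleton_zero.mpr h)
  set U : Set K := (S : Set K) ∩ (fun y => x * y) ⁻¹' (S : Set K) with hU
  have hUopen : IsOpen U := hopen.inter (hopen.preimage (continuous_mul_left x))
  have h0U : (0 : K) ∈ U := ⟨S.zero_mem, by simp [S.zero_mem]⟩
  obtain ⟨b, hbU, hbne⟩ : ∃ b ∈ U, b ≠ 0 := by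
    by_contra h
    push_neg at h
    have : U = {0} := Set.Subset.antisymm (fun y hy => h y hy)
      (fun y hy => by simp_all)
    exact h0 (this ▸ hUopen)
  exact ⟨x * b, hbU.2, b, hbU.1, hbne, by field_simp⟩
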